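/- For the phase-plane ODE dP/dq = c - f(q)/P with P(0) = c*/μ, where 0 < c < c* and f∈C¹([0,1]) satisfies f(0)=f(1)=0 and f'(1)<0, the solution P^c stays strictly below the semi-wave trajectory P_{c*} for q>0 as long as both are positive, and there exists Q^c ∈ (0,1) with P^c > 0 on [0,Q^c) and P^c(Q^c) = 0. -/

import Mathlib

open Set Filter Topology

/-- Derivative of the difference D = Pstar - Pc. -/
lemma D_hasDeriv (f Pstar Pc : ℝ → ℝ) (cstar c s : ℝ)
    (hps : 0 < Pstar s) (hpc : 0 < Pc s)
    (h1 : HasDerivAt Pstar (cstar - f s / Pstar s) s)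
    (h2 : HasDerivAt Pc (c - f s / Pc s) s) :
    HasDerivAt (fun t => Pstar t - Pc t)
      ((cstar - c) + (f s / (Pc s * Pstar s)) * (Pstar s - Pc s)) s := by
  have h : HasDerivAt (fun t => Pstar t - Pc t) _ s := h1.sub h2
  convert h using 1
  have hps' := hps.ne'
  have hpc' := hpc.ne'
  field_simp
  ring

/-- Comparison lemma: while `Pc` stays positive, it stays strictly below `Pstar`. -/
lemma comp_aux (f Pstar Pc : ℝ → ℝ) (cstar c : ℝ)
    (hcc : c < cstar)
    (hfc : ContinuousOn f (Icc 0 1))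
    (hPstar_cont : ContinuousOn Pstar (Icc 0 1))
    (hPstar_pos : ∀ s ∈ Ico (0:ℝ) 1, 0 < Pstar s)
    (hPstar_ode : ∀ s ∈ Ioo (0:ℝ) 1, HasDerivAt Pstar (cstar - f s / Pstar s) s)
    (hPc_cont : ContinuousOn Pc (Icc 0 1))
    (hPc_ode : ∀ s ∈ Ioo (0:ℝ) 1, 0 < Pc s → HasDerivAt Pc (c - f s / Pc s) s)
    (hPcPstar0 : Pc 0 = Pstar 0)
    (b : ℝ) (hb : b ∈ Ioc (0:ℝ) 1)
    (hpos : ∀ s ∈ Ico (0:ℝ) b, 0 < Pc s) :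
    ∀ s ∈ Ioo (0:ℝ) b, Pc s < Pstar s := by
  rintro s₁ ⟨hs₁0, hs₁b⟩
  have hs₁1 : s₁ < 1 := lt_of_lt_of_le hs₁b hb.2
  set D : ℝ → ℝ := fun s => Pstar s - Pc s with hDdef
  have hsub : Icc (0:ℝ) s₁ ⊆ Icc 0 1 := Icc_subset_Icc le_rfl hs₁1.le
  have hPcpos : ∀ s ∈ Icc (0:ℝ) s₁, 0 < Pc s :=
    fun s hs => hpos s ⟨hs.1, lt_of_le_of_lt hs.2 hs₁b⟩
  have hPspos : ∀ s ∈ Icc (0:ℝ) s₁, 0 < Pstar s :=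
    fun s hs => hPstar_pos s ⟨hs.1, lt_of_le_of_lt hs.2 hs₁1⟩
  have hDcont : ContinuousOn D (Icc 0 s₁) :=
    (hPstar_cont.mono hsub).sub (hPc_cont.mono hsub)
  have hD0 : D 0 = 0 := by simp [hDdef, hPcPstar0]
  have hDeriv : ∀ s ∈ Ioc (0:ℝ) s₁,
      HasDerivAt D ((cstar - c) + (f s / (Pc s * Pstar s)) * D s) s := by
    intro s hs
    have hs' : s ∈ Ioo (0:ℝ) 1 := ⟨hs.1, lt_of_le_of_lt hs.2 hs₁1⟩
    have hsm : s ∈ Icc (0:ℝ) s₁ := ⟨hs.1.le, hs.2⟩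
    exact D_hasDeriv f Pstar Pc cstar c s (hPspos s hsm) (hPcpos s hsm)
      (hPstar_ode s hs') (hPc_ode s hs' (hPcpos s hsm))
  -- bound on the coefficient g
  have hgcont : ContinuousOn (fun s => f s / (Pc s * Pstar s)) (Icc 0 s₁) := by
    refine (hfc.mono hsub).div ((hPc_cont.mono hsub).mul (hPstar_cont.mono hsub)) ?_
    exact fun s hs => (mul_pos (hPcpos s hs) (hPspos s hs)).ne'
  obtain ⟨M₀, hM₀⟩ := isCompact_Icc.exists_bound_of_continuousOn hgcont
  set M : ℝ := max M₀ 0 with hMdef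
  have hM0 : 0 ≤ M := le_max_right _ _
  have hM : ∀ s ∈ Icc (0:ℝ) s₁, |f s / (Pc s * Pstar s)| ≤ M :=
    fun s hs => le_trans (by rw [← Real.norm_eq_abs]; exact hM₀ s hs) (le_max_left _ _)
  have hccpos : 0 < cstar - c := sub_pos.mpr hcc
  set ε : ℝ := (cstar - c) / (2 * (M + 1)) with hεdef
  have hεpos : 0 < ε := div_pos hccpos (by linarith)
  -- continuity at 0 gives δ
  have hcw : ContinuousWithinAt D (Icc 0 s₁) 0 := hDcont 0 ⟨le_rfl, hs₁0.le⟩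
  obtain ⟨δ₀, hδ₀pos, hδ₀⟩ := Metric.continuousWithinAt_iff.mp hcw ε hεpos
  set δ : ℝ := min (δ₀ / 2) s₁ with hδdef
  have hδpos : 0 < δ := lt_min (by linarith) hs₁0
  have hδle : δ ≤ s₁ := min_le_right _ _
  have hDsmall : ∀ s ∈ Icc (0:ℝ) δ, |D s| < ε := by
    intro s hs
    have hsm : s ∈ Icc (0:ℝ) s₁ := ⟨hs.1, le_trans hs.2 hδle⟩
    have hd : dist s 0 < δ₀ := by
      rw [Real.dist_eq, sub_zero, abs_of_nonneg hs.1]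
      exact lt_of_le_of_lt (le_trans hs.2 (min_le_left _ _)) (by linarith)
    have := hδ₀ hsm hd
    rwa [Real.dist_eq, hD0, sub_zero] at this
  -- derivative value positive on (0, δ]
  have hvalpos : ∀ s ∈ Ioc (0:ℝ) δ,
      0 < (cstar - c) + (f s / (Pc s * Pstar s)) * D s := by
    intro s hs
    have hsm : s ∈ Icc (0:ℝ) s₁ := ⟨hs.1.le, le_trans hs.2 hδle⟩
    have h1 : |(f s / (Pc s * Pstar s)) * D s| ≤ M * ε := by
      rw [abs_mul]
      exact mul_le_mul (hM s hsm) (hDsmall s ⟨hs.1.le, hs.2⟩).le (abs_nonneg _) hM0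
    have h2 : M * ε ≤ (cstar - c) / 2 := by
      rw [hεdef, mul_div_assoc', div_le_div_iff₀ (by linarith) (by norm_num : (0:ℝ) < 2)]
      nlinarith
    have := neg_abs_le ((f s / (Pc s * Pstar s)) * D s)
    linarith
  -- D strictly monotone on [0, δ]
  have hmono : StrictMonoOn D (Icc 0 δ) := by
    refine strictMonoOn_of_deriv_pos (convex_Icc 0 δ)
      (hDcont.mono (Icc_subset_Icc le_rfl hδle)) ?_
    intro x hx
    rw [interior_Icc] at hx
    have hder := hDeriv x ⟨hx.1, le_trans hx.2.le hδle⟩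
    rw [hder.deriv]
    exact hvalpos x ⟨hx.1, hx.2.le⟩
  have hDposδ : ∀ s ∈ Ioc (0:ℝ) δ, 0 < D s := by
    intro s hs
    have := hmono ⟨le_rfl, hδpos.le⟩ ⟨hs.1.le, hs.2⟩ hs.1
    rwa [hD0] at this
  -- conclude
  by_contra hcon
  push_neg at hcon
  have hDs₁ : D s₁ ≤ 0 := by simp [hDdef]; linarith
  rcases le_or_gt s₁ δ with h | hδlt
  · exact absurd (hDposδ s₁ ⟨hs₁0, h⟩) (not_lt.mpr hDs₁)
  -- first zero s₀ in [δ, s₁]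
  set E : Set ℝ := Icc δ s₁ ∩ D ⁻¹' (Iic 0) with hEdef
  have hEclosed : IsClosed E :=
    ContinuousOn.preimage_isClosed_of_isClosed
      (hDcont.mono (Icc_subset_Icc hδpos.le le_rfl)) isClosed_Icc isClosed_Iic
  have hEcompact : IsCompact E :=
    isCompact_Icc.of_isClosed_subset hEclosed inter_subset_left
  have hEne : E.Nonempty := ⟨s₁, ⟨hδlt.le, le_rfl⟩, hDs₁⟩
  set s₀ : ℝ := sInf E with hs₀def
  have hs₀E : s₀ ∈ E := hEcompact.sInf_mem hEne
  obtain ⟨⟨hδs₀, hs₀s₁⟩, hDs₀⟩ := hs₀E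
  have hδlt₀ : δ < s₀ := by
    rcases lt_or_eq_of_le hδs₀ with h | h
    · exact h
    · exact absurd (h ▸ hDs₀ : D δ ≤ 0) (not_le.mpr (hDposδ δ ⟨hδpos, le_rfl⟩))
  have hbefore : ∀ t ∈ Ico δ s₀, 0 < D t := by
    intro t ht
    by_contra h
    push_neg at h
    have : t ∈ E := ⟨⟨ht.1, le_trans ht.2.le hs₀s₁⟩, h⟩
    exact absurd (csInf_le hEcompact.bddBelow this) (not_le.mpr ht.2)
  -- D s₀ ≥ 0 by left continuity
  haveI : (𝓝[Ioo δ s₀] s₀).NeBot := by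
    rw [nhdsWithin_Ioo_eq_nhdsLT hδlt₀]; infer_instance
  have hcw₀ : ContinuousWithinAt D (Icc 0 s₁) s₀ :=
    hDcont s₀ ⟨le_trans hδpos.le hδs₀, hs₀s₁⟩
  have htend : Tendsto D (𝓝[Ioo δ s₀] s₀) (𝓝 (D s₀)) := by
    refine hcw₀.tendsto.mono_left (nhdsWithin_mono _ ?_)
    intro t ht
    exact ⟨le_trans hδpos.le ht.1.le, le_trans ht.2.le hs₀s₁⟩
  have hDs₀ge : 0 ≤ D s₀ := by
    refine ge_of_tendsto htend ?_
    filter_upwards [eventually_mem_nhdsWithin] with t ht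
    exact (hbefore t ⟨ht.1.le, ht.2⟩).le
  have hDs₀eq : D s₀ = 0 := le_antisymm hDs₀ hDs₀ge
  -- derivative at s₀ is cstar - c > 0, contradiction with left values positive
  have hder : HasDerivAt D (cstar - c) s₀ := by
    have := hDeriv s₀ ⟨lt_trans hδpos hδlt₀, hs₀s₁⟩
    rwa [hDs₀eq, mul_zero, add_zero] at this
  have hslope : Tendsto (slope D s₀) (𝓝[≠] s₀) (𝓝 (cstar - c)) :=
    hasDerivAt_iff_tendsto_slope.mp hder
  have hev : ∀ᶠ t in 𝓝[Ioo δ s₀] s₀, 0 < slope D s₀ t := by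
    refine (hslope.eventually (eventually_gt_nhds hccpos)).filter_mono
      (nhdsWithin_mono _ ?_)
    intro t ht
    exact ne_of_lt ht.2
  obtain ⟨t, hslopet, htmem⟩ := (hev.and eventually_mem_nhdsWithin).exists
  have hslopeval : slope D s₀ t = D t / (t - s₀) := by
    rw [slope_def_field, hDs₀eq, sub_zero]
  rw [hslopeval] at hslopet
  have htneg : t - s₀ < 0 := sub_neg.mpr htmem.2
  have hDtneg : D t < 0 := by
    rcases div_pos_iff.mp hslopet with ⟨h1, h2⟩ | ⟨h1, h2⟩
    · linarith
    · exact h1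
  exact absurd (hbefore t ⟨htmem.1.le, htmem.2⟩) (not_lt.mpr hDtneg.le)
/-- For 0 < c < c*, the solution P^c of the phase-plane ODE
    dP/dq = c - f(q)/P with P(0) = c*/μ stays strictly below the semi-wave
    trajectory P_{c*} while both are positive, and hits 0 at some Q^c ∈ (0,1):
    P^c > 0 on [0,Q^c) and P^c(Q^c) = 0. -/
theorem phase_plane_comparison
    (f Pstar Pc : ℝ → ℝ) (cstar c μ : ℝ)
    (hμ : 0 < μ) (hc : 0 < c) (hcc : c < cstar)
    (hf : ContDiffOn ℝ 1 f (Icc 0 1))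
    (hf0 : f 0 = 0) (hf1 : f 1 = 0)
    (hf'1 : deriv f 1 < 0)
    -- Pstar is the semi-wave trajectory for speed c*
    (hPstar_cont : ContinuousOn Pstar (Icc 0 1))
    (hPstar_pos : ∀ s ∈ Ico (0:ℝ) 1, 0 < Pstar s)
    (hPstar_ode : ∀ s ∈ Ioo (0:ℝ) 1, HasDerivAt Pstar (cstar - f s / Pstar s) s)
    (hPstar0 : Pstar 0 = cstar / μ)
    (hPstar1 : Pstar 1 = 0)
    -- Pc solves the ODE with speed c and the same initial datum, while positive
    (hPc_cont : ContinuousOn Pc (Icc 0 1))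
    (hPc_ode : ∀ s ∈ Ioo (0:ℝ) 1, 0 < Pc s → HasDerivAt Pc (c - f s / Pc s) s)
    (hPc0 : Pc 0 = cstar / μ) :
    ∃ Q ∈ Ioo (0:ℝ) 1,
      (∀ s ∈ Ico (0:ℝ) Q, 0 < Pc s) ∧ Pc Q = 0 ∧
      ∀ s ∈ Ioo (0:ℝ) Q, Pc s < Pstar s := by
  have hcstar : 0 < cstar := hc.trans hcc
  have hinit : 0 < Pc 0 := by rw [hPc0]; positivity
  have hfc : ContinuousOn f (Icc 0 1) := hf.continuousOn
  have hPcPstar0 : Pc 0 = Pstar 0 := by rw [hPc0, hPstar0]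
  have comp := comp_aux f Pstar Pc cstar c hcc hfc hPstar_cont hPstar_pos
    hPstar_ode hPc_cont hPc_ode hPcPstar0
  -- f is positive just to the left of 1
  have hfd : DifferentiableAt ℝ f 1 := by
    by_contra h
    rw [deriv_zero_of_not_differentiableAt h] at hf'1
    exact absurd hf'1 (lt_irrefl 0)
  have hslopef : Tendsto (slope f 1) (𝓝[≠] 1) (𝓝 (deriv f 1)) :=
    hasDerivAt_iff_tendsto_slope.mp hfd.hasDerivAt
  have hevf : ∀ᶠ t in 𝓝[<] (1:ℝ), slope f 1 t < 0 :=
    (hslopef.eventually (eventually_lt_nhds hf'1)).filter_mono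
      (nhdsWithin_mono _ (fun t ht => ne_of_lt ht))
  obtain ⟨a₀, ha₀, hfsub⟩ := mem_nhdsLT_iff_exists_Ioo_subset.mp hevf
  set a : ℝ := max a₀ 0 with hadef
  have ha1 : a < 1 := max_lt ha₀ one_pos
  have ha0 : 0 ≤ a := le_max_right _ _
  have hfpos : ∀ t ∈ Ioo a 1, 0 < f t := by
    intro t ht
    have ht' : t ∈ Ioo a₀ 1 := ⟨lt_of_le_of_lt (le_max_left _ _) ht.1, ht.2⟩
    have hsl : slope f 1 t < 0 := hfsub ht'
    rw [slope_def_field, hf1, sub_zero] at hsl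
    have ht1 : t - 1 < 0 := sub_neg.mpr ht.2
    rcases div_neg_iff.mp hsl with ⟨h1, h2⟩ | ⟨h1, h2⟩
    · linarith
    · linarith
  -- Pc cannot stay positive on all of [0,1)
  have hnot : ¬ (∀ s ∈ Ico (0:ℝ) 1, 0 < Pc s) := by
    intro hall
    have hcomp1 := comp 1 ⟨one_pos, le_rfl⟩ hall
    set D : ℝ → ℝ := fun s => Pstar s - Pc s with hDdef
    have hDcont : ContinuousOn D (Icc 0 1) := hPstar_cont.sub hPc_cont
    haveI : (𝓝[Ioo (0:ℝ) 1] 1).NeBot := by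
      rw [nhdsWithin_Ioo_eq_nhdsLT one_pos]; infer_instance
    -- Pc 1 ≤ 0 by taking the limit in Pc < Pstar
    have htendD : Tendsto D (𝓝[Ioo (0:ℝ) 1] 1) (𝓝 (D 1)) :=
      (hDcont 1 ⟨zero_le_one, le_rfl⟩).tendsto.mono_left
        (nhdsWithin_mono _ (fun t ht => ⟨ht.1.le, ht.2.le⟩))
    have hD1 : 0 ≤ D 1 := by
      refine ge_of_tendsto htendD ?_
      filter_upwards [eventually_mem_nhdsWithin] with t ht
      exact sub_nonneg.mpr (hcomp1 t ht).le
    have hPc1le : Pc 1 ≤ 0 := by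
      have : D 1 = 0 - Pc 1 := by simp [hDdef, hPstar1]
      rw [this] at hD1; linarith
    -- Pc 1 ≥ 0 by left continuity of Pc
    have htendPc : Tendsto Pc (𝓝[Ioo (0:ℝ) 1] 1) (𝓝 (Pc 1)) :=
      (hPc_cont 1 ⟨zero_le_one, le_rfl⟩).tendsto.mono_left
        (nhdsWithin_mono _ (fun t ht => ⟨ht.1.le, ht.2.le⟩))
    have hPc1ge : 0 ≤ Pc 1 := by
      refine ge_of_tendsto htendPc ?_
      filter_upwards [eventually_mem_nhdsWithin] with t ht
      exact (hall t ⟨ht.1.le, ht.2⟩).le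
    have hPc1 : Pc 1 = 0 := le_antisymm hPc1le hPc1ge
    -- now D is strictly increasing on [a,1] but D 1 = 0 while D > 0 on (a,1)
    have hmono : StrictMonoOn D (Icc a 1) := by
      refine strictMonoOn_of_deriv_pos (convex_Icc a 1)
        (hDcont.mono (Icc_subset_Icc ha0 le_rfl)) ?_
      intro x hx
      rw [interior_Icc] at hx
      have hx01 : x ∈ Ioo (0:ℝ) 1 := ⟨lt_of_le_of_lt ha0 hx.1, hx.2⟩
      have hpc : 0 < Pc x := hall x ⟨hx01.1.le, hx01.2⟩
      have hps : 0 < Pstar x := hPstar_pos x ⟨hx01.1.le, hx01.2⟩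
      have hder := D_hasDeriv f Pstar Pc cstar c x hps hpc
        (hPstar_ode x hx01) (hPc_ode x hx01 hpc)
      rw [hder.deriv]
      have hDx : 0 < Pstar x - Pc x := sub_pos.mpr (hcomp1 x hx01)
      have hfx : 0 < f x := hfpos x hx
      have : 0 < f x / (Pc x * Pstar x) * (Pstar x - Pc x) :=
        mul_pos (div_pos hfx (mul_pos hpc hps)) hDx
      linarith
    set m : ℝ := (a + 1) / 2 with hmdef
    have hm : m ∈ Ioo a 1 := ⟨by rw [hmdef]; linarith, by rw [hmdef]; linarith⟩
    have h1 : D m < D 1 := hmono ⟨hm.1.le, hm.2.le⟩ ⟨ha1.le, le_rfl⟩ hm.2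
    have hD1eq : D 1 = 0 := by simp [hDdef, hPstar1, hPc1]
    have hDm : 0 < D m :=
      sub_pos.mpr (hcomp1 m ⟨lt_of_le_of_lt ha0 hm.1, hm.2⟩)
    rw [hD1eq] at h1
    linarith
  push_neg at hnot
  obtain ⟨s₂, hs₂mem, hs₂⟩ := hnot
  have hs₂0 : 0 < s₂ := by
    rcases lt_or_eq_of_le hs₂mem.1 with h | h
    · exact h
    · rw [← h] at hs₂; linarith
  -- the first zero of Pc
  set T : Set ℝ := Icc 0 s₂ ∩ Pc ⁻¹' (Iic 0) with hTdef
  have hTclosed : IsClosed T :=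
    ContinuousOn.preimage_isClosed_of_isClosed
      (hPc_cont.mono (Icc_subset_Icc le_rfl hs₂mem.2.le)) isClosed_Icc isClosed_Iic
  have hTcompact : IsCompact T :=
    isCompact_Icc.of_isClosed_subset hTclosed inter_subset_left
  have hTne : T.Nonempty := ⟨s₂, ⟨hs₂0.le, le_rfl⟩, hs₂⟩
  set Q : ℝ := sInf T with hQdef
  have hQT : Q ∈ T := hTcompact.sInf_mem hTne
  obtain ⟨⟨hQ0, hQs₂⟩, hPcQle⟩ := hQT
  have hQpos : 0 < Q := by
    rcases lt_or_eq_of_le hQ0 with h | h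
    · exact h
    · rw [← h] at hPcQle; exact absurd hinit (not_lt.mpr hPcQle)
  have hQ1 : Q < 1 := lt_of_le_of_lt hQs₂ hs₂mem.2
  have hposQ : ∀ s ∈ Ico (0:ℝ) Q, 0 < Pc s := by
    intro s hs
    by_contra h
    push_neg at h
    have : s ∈ T := ⟨⟨hs.1, le_trans hs.2.le hQs₂⟩, h⟩
    exact absurd (csInf_le hTcompact.bddBelow this) (not_le.mpr hs.2)
  -- Pc Q = 0
  haveI : (𝓝[Ioo (0:ℝ) Q] Q).NeBot := by
    rw [nhdsWithin_Ioo_eq_nhdsLT hQpos]; infer_instance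
  have htendPcQ : Tendsto Pc (𝓝[Ioo (0:ℝ) Q] Q) (𝓝 (Pc Q)) :=
    (hPc_cont Q ⟨hQ0, hQ1.le⟩).tendsto.mono_left
      (nhdsWithin_mono _ (fun t ht => ⟨ht.1.le, le_trans ht.2.le hQ1.le⟩))
  have hPcQge : 0 ≤ Pc Q := by
    refine ge_of_tendsto htendPcQ ?_
    filter_upwards [eventually_mem_nhdsWithin] with t ht
    exact (hposQ t ⟨ht.1.le, ht.2⟩).le
  have hPcQ : Pc Q = 0 := le_antisymm hPcQle hPcQge
  exact ⟨Q, ⟨hQpos, hQ1⟩, hposQ, hPcQ, comp Q ⟨hQpos, hQ1.le⟩ hposQ⟩
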